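/- For every positive integer n, the number of involutions in the hyperoctahedral group B_n satisfies √(2n) ≤ i_n^B / i_{n−1}^B ≤ √(2n) + 2. -/

import Mathlib

/-- Negation on `{±1,…,±n}`, modelled as `Fin n × ZMod 2` with `(i,s) ↦ (i,s+1)`. -/
def negPerm (n : ℕ) : Equiv.Perm (Fin n × ZMod 2) :=
  Equiv.prodCongr (Equiv.refl (Fin n)) (Equiv.addLeft (1 : ZMod 2))

/-- The hyperoctahedral group `B_n` of signed permutations: permutations of
`{±1,…,±n}` commuting with negation. -/
def hyperoctahedral (n : ℕ) : Subgroup (Equiv.Perm (Fin n × ZMod 2)) :=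
  Subgroup.centralizer {negPerm n}

/-- The number of involutions `i_n^B` in `B_n`. -/
noncomputable def iB (n : ℕ) : ℕ :=
  Nat.card {x : Equiv.Perm (Fin n × ZMod 2) // x ∈ hyperoctahedral n ∧ x ^ 2 = 1}

/-! ### A parametrization of involutions in `B_n`

An element of the centralizer of the negation is determined by the pair
`(f, ε)` of its induced action on indices and sign changes; it is an involution
iff `f` is an involution (as a function) and `ε` is constant on `f`-orbits. -/

/-- Pairs `(f, ε)` with `f` an involution and `ε` constant on `f`-orbits. -/
def IS (α : Type) : Type :=
  {q : (α → α) × (α → ZMod 2) // ∀ i, q.1 (q.1 i) = i ∧ q.2 (q.1 i) = q.2 i}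

instance {α : Type} [Finite α] : Finite (IS α) := by
  unfold IS; infer_instance

lemma zmod2_cases (s : ZMod 2) : s = 0 ∨ s = 1 := by fin_cases s <;> [left; right] <;> rfl

lemma zmod2_add_self (a : ZMod 2) : a + a = 0 := by fin_cases a <;> decide

lemma centralizer_apply {n : ℕ} (x : Equiv.Perm (Fin n × ZMod 2))
    (hc : x ∈ hyperoctahedral n) (i : Fin n) (s : ZMod 2) :
    x (i, s) = ((x (i, 0)).1, s + (x (i, 0)).2) := by
  have hcomm : ∀ p, x (negPerm n p) = negPerm n (x p) := by
    intro p
    have h := Subgroup.mem_centralizer_iff.mp hc (negPerm n) rfl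
    have := congrArg (fun e => e.toFun p) h
    simpa [Equiv.Perm.mul_apply] using this.symm
  rcases zmod2_cases s with h | h <;> subst h
  · simp
  · have h1 := hcomm (i, 0)
    simp only [negPerm, Equiv.prodCongr_apply, Equiv.coe_refl, Prod.map, id_eq,
      Equiv.coe_addLeft] at h1
    rw [show ((i : Fin n), (1 : ZMod 2)) = ((i : Fin n), 1 + 0) by norm_num, h1]

/-- The permutation of `Fin n × ZMod 2` associated to a pair in `IS (Fin n)`. -/
def ISperm {n : ℕ} (q : IS (Fin n)) : Equiv.Perm (Fin n × ZMod 2) :=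
  Function.Involutive.toPerm (fun p => (q.1.1 p.1, p.2 + q.1.2 p.1))
    (by
      rintro ⟨i, s⟩
      obtain ⟨h1, h2⟩ := q.2 i
      simp [h1, h2, add_assoc, zmod2_add_self])

/-- Involutions in `B_n` are parametrized by `IS (Fin n)`. -/
noncomputable def ISequivB (n : ℕ) :
    {x : Equiv.Perm (Fin n × ZMod 2) // x ∈ hyperoctahedral n ∧ x ^ 2 = 1} ≃ IS (Fin n) where
  toFun x := ⟨(fun i => (x.1 (i, 0)).1, fun i => (x.1 (i, 0)).2), by
    intro i
    obtain ⟨hc, hsq⟩ := x.2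
    have key := centralizer_apply x.1 hc
    have hsq' : x.1 (x.1 (i, 0)) = (i, 0) := by
      have := congrArg (fun e => e.toFun (i, (0 : ZMod 2))) hsq
      simpa [pow_succ, Equiv.Perm.mul_apply] using this
    have hk := key (x.1 (i, 0)).1 (x.1 (i, 0)).2
    rw [Prod.mk.eta] at hk
    rw [hk] at hsq'
    refine ⟨congrArg Prod.fst hsq', ?_⟩
    have h2 := congrArg Prod.snd hsq'
    simp only at h2
    have : ∀ a b : ZMod 2, b + a = 0 → a = b := by decide
    exact this _ _ h2⟩
  invFun q := ⟨ISperm q, by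
    constructor
    · show ISperm q ∈ Subgroup.centralizer _
      rw [Subgroup.mem_centralizer_iff]
      rintro y rfl
      ext ⟨i, s⟩ <;>
      · simp [ISperm, negPerm, Function.Involutive.toPerm, Equiv.Perm.mul_apply]
        try ring
    · ext ⟨i, s⟩ : 2
      all_goals try {
        obtain ⟨h1, h2⟩ := q.2 i
        simp only [pow_succ, pow_zero, one_mul, Equiv.Perm.mul_apply, ISperm,
          Function.Involutive.coe_toPerm, Function.Involutive.toPerm, Equiv.coe_fn_mk, h1, h2, Equiv.Perm.one_apply]
        try rw [add_assoc, zmod2_add_self, add_zero] }⟩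
  left_inv := by
    rintro ⟨x, hx⟩
    ext ⟨i, s⟩ <;>
      simp [ISperm, Function.Involutive.toPerm, centralizer_apply x hx.1 i s]
  right_inv := by
    rintro ⟨⟨f, ε⟩, h⟩
    simp [ISperm, Function.Involutive.toPerm]
    rfl

/-- The number of involutions in `B_n` in terms of the parametrization. -/
noncomputable def tI (n : ℕ) : ℕ := Nat.card (IS (Fin n))

lemma iB_eq_tI (n : ℕ) : iB n = tI n := Nat.card_congr (ISequivB n)

/-! ### Transport and decomposition of `IS` -/

def ISmap {α β : Type} (e : α ≃ β) : IS α ≃ IS β where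
  toFun q := ⟨(e ∘ q.1.1 ∘ e.symm, q.1.2 ∘ e.symm), by
    intro i
    obtain ⟨h1, h2⟩ := q.2 (e.symm i)
    simp [h1, h2]⟩
  invFun q := ⟨(e.symm ∘ q.1.1 ∘ e, q.1.2 ∘ e), by
    intro i
    obtain ⟨h1, h2⟩ := q.2 (e i)
    simp [h1, h2]⟩
  left_inv q := by
    apply Subtype.ext
    apply Prod.ext <;> funext x <;> simp
  right_inv q := by
    apply Subtype.ext
    apply Prod.ext <;> funext x <;> simp

section decomp
variable {α : Type} [DecidableEq α]

/-- Involution-pairs fixing `a` correspond to a sign at `a` plus an involution-pair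
on the complement of `a`. -/
def ISfixEquiv (a : α) : {q : IS α // q.1.1 a = a} ≃ ZMod 2 × IS {x : α // x ≠ a} where
  toFun q :=
    (q.1.1.2 a, ⟨(fun x => ⟨q.1.1.1 x.1, fun h => x.2 (by
        have := (q.1.2 x.1).1; rw [h, q.2] at this; exact this.symm)⟩,
       fun x => q.1.1.2 x.1), by
      rintro ⟨x, hx⟩
      exact ⟨Subtype.ext (q.1.2 x).1, (q.1.2 x).2⟩⟩)
  invFun p :=
    ⟨⟨(fun x => if hx : x = a then a else (p.2.1.1 ⟨x, hx⟩).1,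
       fun x => if hx : x = a then p.1 else p.2.1.2 ⟨x, hx⟩), by
      intro x
      by_cases hx : x = a
      · subst hx; simp
      · simp only [dif_neg hx, dif_neg (p.2.1.1 ⟨x, hx⟩).2]
        exact ⟨congrArg Subtype.val (p.2.2 ⟨x, hx⟩).1, (p.2.2 ⟨x, hx⟩).2⟩⟩,
     by simp⟩
  left_inv q := by
    obtain ⟨⟨⟨f, ε⟩, h⟩, hq⟩ := q
    apply Subtype.ext
    apply Subtype.ext
    dsimp only at hq ⊢
    apply Prod.ext <;> funext x <;> dsimp only <;> by_cases hx : x = a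
    · rw [dif_pos hx, hx]; exact hq.symm
    · rw [dif_neg hx]
    · rw [dif_pos hx, hx]
    · rw [dif_neg hx]
  right_inv p := by
    obtain ⟨s, ⟨⟨g, δ⟩, hg⟩⟩ := p
    dsimp only
    apply Prod.ext
    · show (if hx : a = a then s else _) = s
      rw [dif_pos rfl]
    · apply Subtype.ext
      apply Prod.ext <;> funext x <;> dsimp only
      · apply Subtype.ext
        dsimp only
        rw [dif_neg x.2]
      · rw [dif_neg x.2]

/-- Involution-pairs sending `a` to `b ≠ a` correspond to a sign plus an
involution-pair avoiding `a, b`. -/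
def ISswapEquiv (a b : α) (hb : b ≠ a) :
    {q : IS α // q.1.1 a = b} ≃ ZMod 2 × IS {x : α // x ≠ a ∧ x ≠ b} where
  toFun q :=
    (q.1.1.2 a, ⟨(fun x => ⟨q.1.1.1 x.1,
        ⟨fun h => x.2.2 (by
          have h1 := (q.1.2 x.1).1
          rw [h] at h1
          rw [q.2] at h1
          exact h1.symm),
         fun h => x.2.1 (by
          have h1 := (q.1.2 x.1).1
          rw [h] at h1
          have h2 := (q.1.2 a).1
          rw [q.2] at h2
          rw [← h1]
          exact h2)⟩⟩,
       fun x => q.1.1.2 x.1), by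
      rintro ⟨x, hx⟩
      exact ⟨Subtype.ext (q.1.2 x).1, (q.1.2 x).2⟩⟩)
  invFun p :=
    ⟨⟨(fun x => if hx : x = a then b else if hx2 : x = b then a else (p.2.1.1 ⟨x, hx, hx2⟩).1,
       fun x => if hx : x = a then p.1 else if hx2 : x = b then p.1 else p.2.1.2 ⟨x, hx, hx2⟩), by
      intro x
      by_cases hx : x = a
      · subst hx; simp [hb]
      · by_cases hx2 : x = b
        · subst hx2; simp [hb]
        · have hga := (p.2.1.1 ⟨x, hx, hx2⟩).2.1
          have hgb := (p.2.1.1 ⟨x, hx, hx2⟩).2.2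
          simp only [dif_neg hx, dif_neg hx2, dif_neg hga, dif_neg hgb]
          exact ⟨congrArg Subtype.val (p.2.2 ⟨x, hx, hx2⟩).1, (p.2.2 ⟨x, hx, hx2⟩).2⟩⟩,
     by simp⟩
  left_inv q := by
    obtain ⟨⟨⟨f, ε⟩, h⟩, hq⟩ := q
    apply Subtype.ext
    apply Subtype.ext
    dsimp only at hq ⊢
    apply Prod.ext <;> funext x <;> dsimp only
    · by_cases hx : x = a
      · rw [dif_pos hx, hx, hq]
      · by_cases hx2 : x = b
        · rw [dif_neg hx, dif_pos hx2, hx2, ← hq]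
          exact (h a).1.symm
        · rw [dif_neg hx, dif_neg hx2]
    · by_cases hx : x = a
      · rw [dif_pos hx, hx]
      · by_cases hx2 : x = b
        · rw [dif_neg hx, dif_pos hx2, hx2, ← hq]
          exact (h a).2.symm
        · rw [dif_neg hx, dif_neg hx2]
  right_inv p := by
    obtain ⟨s, ⟨⟨g, δ⟩, hg⟩⟩ := p
    dsimp only
    apply Prod.ext
    · show (if hx : a = a then s else _) = s
      rw [dif_pos rfl]
    · apply Subtype.ext
      apply Prod.ext <;> funext x <;> dsimp only
      · apply Subtype.ext
        dsimp only
        rw [dif_neg x.2.1, dif_neg x.2.2]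
      · rw [dif_neg x.2.1, dif_neg x.2.2]

end decomp

/-! ### The recurrence `i_{n+2}^B = 2 i_{n+1}^B + 2(n+1) i_n^B` -/

lemma card_IS_eq {α : Type} [Fintype α] : Nat.card (IS α) = tI (Fintype.card α) :=
  Nat.card_congr (ISmap (Fintype.equivFin α))

lemma card_sigma' {ι : Type} [Fintype ι] (X : ι → Type) [∀ i, Finite (X i)] :
    Nat.card (Σ i, X i) = ∑ i, Nat.card (X i) := by
  letI : ∀ i, Fintype (X i) := fun i => Fintype.ofFinite _
  simp [Nat.card_eq_fintype_card, Fintype.card_sigma]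

lemma tI_rec (n : ℕ) : tI (n + 2) = 2 * tI (n + 1) + 2 * (n + 1) * tI n := by
  classical
  set α := Fin (n + 2)
  have hcard : Fintype.card α = n + 2 := by simp [α]
  set a : α := 0
  have h1 : Nat.card (IS α) = ∑ b : α, Nat.card {q : IS α // q.1.1 a = b} := by
    rw [← card_sigma']
    exact Nat.card_congr (Equiv.sigmaFiberEquiv (fun q : IS α => q.1.1 a)).symm
  have hfix : Nat.card {q : IS α // q.1.1 a = a} = 2 * tI (n + 1) := by
    rw [Nat.card_congr (ISfixEquiv a), Nat.card_prod]
    have : Fintype.card {x : α // x ≠ a} = n + 1 := by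
      simp [Fintype.card_subtype_compl, hcard]
    rw [card_IS_eq, this]
    simp [Nat.card_eq_fintype_card]
  have hswap : ∀ b : α, b ≠ a → Nat.card {q : IS α // q.1.1 a = b} = 2 * tI n := by
    intro b hb
    rw [Nat.card_congr (ISswapEquiv a b hb), Nat.card_prod]
    have : Fintype.card {x : α // x ≠ a ∧ x ≠ b} = n := by
      rw [Fintype.card_subtype]
      have : Finset.univ.filter (fun x : α => x ≠ a ∧ x ≠ b) = Finset.univ \ {a, b} := by
        ext x; simp [and_comm]
      rw [this, Finset.card_sdiff_of_subset (by simp)]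
      rw [Finset.card_insert_of_notMem (by simpa using hb.symm)]
      simp [hcard]
    rw [card_IS_eq, this]
    simp [Nat.card_eq_fintype_card]
  have : tI (n + 2) = Nat.card (IS α) := by
    rw [card_IS_eq, hcard]
  rw [this, h1, ← Finset.add_sum_erase _ _ (Finset.mem_univ a), hfix]
  have hsum : ∑ b ∈ Finset.univ.erase a, Nat.card {q : IS α // q.1.1 a = b}
      = (n + 1) * (2 * tI n) := by
    rw [Finset.sum_congr rfl (fun b hb => hswap b (Finset.ne_of_mem_erase hb))]
    rw [Finset.sum_const, Finset.card_erase_of_mem (Finset.mem_univ a)]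
    simp [hcard, Nat.smul_one_eq_cast]
  rw [hsum]
  ring

lemma tI_zero : tI 0 = 1 := by
  have : Unique (IS (Fin 0)) := {
    default := ⟨(fun i => i.elim0, fun i => i.elim0), fun i => i.elim0⟩
    uniq := by
      intro q
      apply Subtype.ext
      apply Prod.ext <;> funext x <;> exact x.elim0 }
  simpa [tI] using Nat.card_unique

lemma tI_one : tI 1 = 2 := by
  have e : IS (Fin 1) ≃ ZMod 2 := {
    toFun := fun q => q.1.2 0
    invFun := fun s => ⟨(id, fun _ => s), by simp⟩
    left_inv := by
      intro q
      apply Subtype.ext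
      apply Prod.ext <;> funext x
      · exact (Subsingleton.elim _ _)
      · exact congrArg q.1.2 (Subsingleton.elim _ _)
    right_inv := fun s => rfl }
  rw [tI, Nat.card_congr e]
  simp [Nat.card_eq_fintype_card]

lemma tI_pos (n : ℕ) : 0 < tI n := by
  induction n using Nat.twoStepInduction with
  | zero => simp [tI_zero]
  | one => simp [tI_one]
  | more n ih1 ih2 => rw [tI_rec]; positivity

/-! ### The analytic bounds -/

lemma key_ineq {s t : ℝ} (hs : 0 ≤ s) (ht : 0 ≤ t) (hts : t ^ 2 = s ^ 2 + 2) :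
    t * (s + 2) ≤ s ^ 2 + 2 * s + 4 := by
  nlinarith [sq_nonneg (t * (s + 2) - (s ^ 2 + 2 * s + 4)), sq_nonneg (t - s), sq_nonneg s]

lemma tI_bounds : ∀ n : ℕ, Real.sqrt (2 * (n + 1)) ≤ (tI (n + 1) : ℝ) / (tI n : ℝ) ∧
    (tI (n + 1) : ℝ) / (tI n : ℝ) ≤ Real.sqrt (2 * (n + 1)) + 2 := by
  intro n
  induction n with
  | zero =>
    rw [tI_zero, tI_one]
    have h2 : Real.sqrt 2 ≤ 2 := by
      nlinarith [Real.sqrt_nonneg 2, Real.sq_sqrt (by norm_num : (0:ℝ) ≤ 2)]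
    norm_num
  | succ n ih =>
    obtain ⟨ihl, ihr⟩ := ih
    have ha : (0 : ℝ) < (tI n : ℝ) := by exact_mod_cast tI_pos n
    have hb : (0 : ℝ) < (tI (n + 1) : ℝ) := by exact_mod_cast tI_pos (n + 1)
    set a := (tI n : ℝ)
    set b := (tI (n + 1) : ℝ)
    set s := Real.sqrt (2 * (n + 1)) with hs_def
    set t := Real.sqrt (2 * (n + 2)) with ht_def
    have hs0 : 0 ≤ s := Real.sqrt_nonneg _
    have ht0 : 0 ≤ t := Real.sqrt_nonneg _
    have hs2 : s ^ 2 = 2 * (n + 1) := Real.sq_sqrt (by positivity)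
    have ht2 : t ^ 2 = 2 * (n + 2) := Real.sq_sqrt (by positivity)
    have hts : t ^ 2 = s ^ 2 + 2 := by rw [hs2, ht2]; ring
    have hst : s ≤ t := Real.sqrt_le_sqrt (by push_cast; linarith)
    have hsa : s * a ≤ b := by
      rw [le_div_iff₀ ha] at ihl; linarith
    have hba : b ≤ (s + 2) * a := by
      rw [div_le_iff₀ ha] at ihr; linarith
    have hC : (tI (n + 2) : ℝ) = 2 * b + 2 * (n + 1) * a := by
      rw [tI_rec n]; push_cast; ring
    have hsq : Real.sqrt (2 * ((n : ℝ) + 1 + 1)) = t := by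
      rw [ht_def]; congr 1; ring
    push_cast
    rw [hsq, hC]
    constructor
    · rw [le_div_iff₀ hb]
      have hkey := key_ineq hs0 ht0 hts
      rcases le_or_gt t 2 with h | h
      · nlinarith
      · nlinarith [mul_le_mul_of_nonneg_left hba (le_of_lt (sub_pos.2 h))]
    · rw [div_le_iff₀ hb]
      have h1 : s ^ 2 * a ≤ s * b := by nlinarith
      nlinarith

/-- For every positive `n`, `√(2n) ≤ i_n^B / i_{n-1}^B ≤ √(2n) + 2`. -/
theorem iB_ratio_bounds (n : ℕ) (hn : 1 ≤ n) :
    Real.sqrt (2 * n) ≤ (iB n : ℝ) / (iB (n - 1) : ℝ) ∧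
    (iB n : ℝ) / (iB (n - 1) : ℝ) ≤ Real.sqrt (2 * n) + 2 := by
  obtain ⟨m, rfl⟩ : ∃ m, n = m + 1 := ⟨n - 1, by omega⟩
  have h := tI_bounds m
  simp only [iB_eq_tI, Nat.add_sub_cancel]
  constructor
  · refine le_trans (le_of_eq ?_) h.1
    congr 1
    push_cast
    ring
  · refine le_trans h.2 (le_of_eq ?_)
    congr 2
    push_cast
    ring
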